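/- Let T be a rooted binary tree with n levels (every internal node has exactly two children and every root-to-leaf path has n vertices), and let G be the n-uniform hypergraph on the vertices of T whose hyperedges are exactly the vertex sets of root-to-leaf paths. Then G has exactly 2^(n-1) hyperedges and Maker has a winning strategy on G. -/

import Mathlib

def MakerWinsAux {V : Type} [DecidableEq V] (E : Finset (Finset V)) :
    ℕ → Finset V → Finset V → Prop
  | 0, M, _ => ∃ e ∈ E, e ⊆ M
  | k+1, M, U =>
      (∃ e ∈ E, e ⊆ M) ∨
      ∃ v ∈ U, (∃ e ∈ E, e ⊆ insert v M) ∨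
        ((U.erase v).Nonempty ∧
          ∀ w ∈ U.erase v, MakerWinsAux E k (insert v M) ((U.erase v).erase w))

/-- Maker (moving first) has a winning strategy in the Maker-Breaker game on the
hypergraph with edge set `E`, played on the board `B`. -/
def MakerWins {V : Type} [DecidableEq V] (E : Finset (Finset V)) (B : Finset V) : Prop :=
  MakerWinsAux E B.card ∅ B

/-- The finset of all boolean lists of length `k` (nodes on level `k` of the
complete infinite rooted binary tree). -/
def listsOfLen : ℕ → Finset (List Bool)
  | 0 => {[]}
  | k+1 => (listsOfLen k).image (· ++ [true]) ∪ (listsOfLen k).image (· ++ [false])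

/-- The vertex set of the full branch (root-to-`l` path) ending at the node `l`. -/
def prefixesF (l : List Bool) : Finset (List Bool) :=
  (Finset.range (l.length + 1)).image (fun i => l.take i)

/-- The vertex set of the level-descending path starting at node `p` and
ending at node `p ++ q`. -/
def pathFinset (p q : List Bool) : Finset (List Bool) :=
  (Finset.range (q.length + 1)).image (fun i => p ++ q.take i)

/-- `S` is (the node set of) a rooted binary tree: it contains the root, is
prefix-closed, and every node has either zero or two children. -/
def IsBinTree (S : Finset (List Bool)) : Prop :=
  [] ∈ S ∧ (∀ l ∈ S, ∀ p : List Bool, p <+: l → p ∈ S) ∧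
    ∀ l ∈ S, ((l ++ [true]) ∈ S ↔ (l ++ [false]) ∈ S)

/-- `l` is a leaf of the tree `S`. -/
def IsLeaf (S : Finset (List Bool)) (l : List Bool) : Prop :=
  l ∈ S ∧ (l ++ [true]) ∉ S ∧ (l ++ [false]) ∉ S

/-- The edge `e` is a level-descending path inside the tree `S`. -/
def InTree (S : Finset (List Bool)) (e : Finset (List Bool)) : Prop :=
  ∃ p q : List Bool, (p ++ q) ∈ S ∧ e = pathFinset p q

lemma mem_listsOfLen {l : List Bool} {k : ℕ} : l ∈ listsOfLen k ↔ l.length = k := by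
  induction k generalizing l with
  | zero => simp [listsOfLen, List.length_eq_zero_iff]
  | succ k ih =>
    simp only [listsOfLen, Finset.mem_union, Finset.mem_image]
    constructor
    · rintro (⟨a, ha, rfl⟩ | ⟨a, ha, rfl⟩) <;> simp [ih.1 ha]
    · intro hl
      rcases l.eq_nil_or_concat with rfl | ⟨a, b, rfl⟩
      · simp only [List.length_nil] at hl; omega
      · simp only [List.concat_eq_append, List.length_append, List.length_singleton] at hl
        have ha : a.length = k := by omega
        cases b
        · right; exact ⟨a, ih.2 ha, by simp⟩
        · left; exact ⟨a, ih.2 ha, by simp⟩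

lemma self_mem_prefixesF (l : List Bool) : l ∈ prefixesF l := by
  simp only [prefixesF, Finset.mem_image, Finset.mem_range]
  exact ⟨l.length, by omega, List.take_length⟩

lemma prefixesF_concat (p : List Bool) (t : Bool) :
    prefixesF (p ++ [t]) = insert (p ++ [t]) (prefixesF p) := by
  ext x
  simp only [prefixesF, Finset.mem_image, Finset.mem_range, Finset.mem_insert,
    List.length_append, List.length_singleton]
  constructor
  · rintro ⟨i, hi, rfl⟩
    by_cases h : i ≤ p.length
    · right; exact ⟨i, by omega, (List.take_append_of_le_length h).symm⟩
    · left; exact (List.take_of_length_le (by simp; omega))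
  · rintro (rfl | ⟨i, hi, rfl⟩)
    · exact ⟨p.length + 1, by omega, List.take_of_length_le (by simp)⟩
    · exact ⟨i, by omega, List.take_append_of_le_length (by omega)⟩

lemma winAll {V : Type} [DecidableEq V] {E : Finset (Finset V)} {M : Finset V}
    (h : ∃ e ∈ E, e ⊆ M) : ∀ (k : ℕ) (U : Finset V), MakerWinsAux E k M U
  | 0, _ => h
  | _+1, _ => Or.inl h

lemma maker_step (n : ℕ) :
    ∀ m k : ℕ, m ≤ k → ∀ (p b : List Bool) (M U : Finset (List Bool)),
      p.length + m + 1 = n →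
      prefixesF p ⊆ M →
      (∀ q : List Bool, q ≠ [] → q.length ≤ m → p ++ q ≠ b → p ++ q ∈ U) →
      MakerWinsAux ((listsOfLen (n-1)).image prefixesF) k M U := by
  intro m
  induction m with
  | zero =>
    intro k _ p b M U hlen hM _
    exact winAll ⟨prefixesF p, Finset.mem_image_of_mem _ (mem_listsOfLen.2 (by omega)), hM⟩ k U
  | succ m ih =>
    intro k hk p b M U hlen hM hU
    obtain ⟨k, rfl⟩ : ∃ k', k = k' + 1 := ⟨k-1, by omega⟩
    set t : Bool := if (p ++ [true]) <+: b then false else true with ht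
    have hnb : ¬ (p ++ [t]) <+: b := by
      by_cases h : (p ++ [true]) <+: b
      · rw [ht, if_pos h]
        intro hf
        obtain ⟨r, hr⟩ := h
        obtain ⟨s, hs⟩ := hf
        rw [← hr] at hs
        simp at hs
      · rw [ht, if_neg h]; exact h
    have hne : ∀ q : List Bool, (p ++ [t]) ++ q ≠ b := fun q hq => hnb ⟨q, hq⟩
    have hcU : p ++ [t] ∈ U := hU [t] (by simp) (by simp) (by simpa using hne [])
    rw [MakerWinsAux]
    refine Or.inr ⟨p ++ [t], hcU, ?_⟩
    by_cases hm : m = 0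
    · left
      refine ⟨prefixesF (p ++ [t]),
        Finset.mem_image_of_mem _ (mem_listsOfLen.2 (by simp; omega)), ?_⟩
      rw [prefixesF_concat]
      exact Finset.insert_subset_insert _ hM
    · refine Or.inr ⟨⟨p ++ [t, true], Finset.mem_erase.2 ⟨?_, ?_⟩⟩, ?_⟩
      · intro h; apply_fun List.length at h; simp at h
      · refine hU [t, true] (by simp) (by simp; omega) ?_
        have h2 : p ++ [t, true] = (p ++ [t]) ++ [true] := by simp
        rw [h2]; exact hne [true]
      · intro w hw
        refine ih k (by omega) (p ++ [t]) w _ _ (by simp; omega) ?_ ?_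
        · rw [prefixesF_concat]
          exact Finset.insert_subset (Finset.mem_insert_self _ _)
            (hM.trans (Finset.subset_insert _ _))
        · intro q hq hql hqw
          have h1 : (p ++ [t]) ++ q = p ++ ([t] ++ q) := by simp
          refine Finset.mem_erase.2 ⟨hqw, Finset.mem_erase.2 ⟨?_, ?_⟩⟩
          · intro h
            have hl2 := congrArg List.length h
            rw [List.length_append] at hl2
            exact hq (List.length_eq_zero_iff.1 (by omega))
          · rw [h1]
            refine hU ([t] ++ q) (by simp) (by simp; omega) (by rw [← h1]; exact hne q)

lemma card_listsOfLen (k : ℕ) : (listsOfLen k).card = 2 ^ k := by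
  induction k with
  | zero => simp [listsOfLen]
  | succ k ih =>
    rw [listsOfLen, Finset.card_union_of_disjoint, Finset.card_image_of_injective _
      (fun a b h => by simpa using h), Finset.card_image_of_injective _
      (fun a b h => by simpa using h), ih]
    · ring
    · rw [Finset.disjoint_left]
      rintro x hx hy
      simp only [Finset.mem_image] at hx hy
      obtain ⟨a, _, rfl⟩ := hx
      obtain ⟨b, _, hb⟩ := hy
      have := (List.append_inj' hb rfl).2
      simp at this

/-- On the complete binary tree with `n` levels, the `n`-uniform hypergraph whose
hyperedges are the root-to-leaf paths has exactly `2^(n-1)` hyperedges,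
and Maker has a winning strategy on it. -/
theorem binary_tree_game (n : ℕ) (hn : 1 ≤ n) :
    ((listsOfLen (n - 1)).image prefixesF).card = 2 ^ (n - 1) ∧
    MakerWins ((listsOfLen (n - 1)).image prefixesF)
      ((Finset.range n).biUnion listsOfLen) := by
  constructor
  · rw [Finset.card_image_of_injOn, card_listsOfLen]
    intro a ha b hb h
    have hab : a ∈ prefixesF b := h ▸ self_mem_prefixesF a
    simp only [prefixesF, Finset.mem_image, Finset.mem_range] at hab
    obtain ⟨i, hi, rfl⟩ := hab
    have la : (b.take i).length = n - 1 := mem_listsOfLen.1 ha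
    have lb : b.length = n - 1 := mem_listsOfLen.1 hb
    have : b.length ≤ i := by simp at la; omega
    exact List.take_of_length_le this
  · set B := (Finset.range n).biUnion listsOfLen with hB
    have hBn : ∀ l : List Bool, l.length < n → l ∈ B := fun l h =>
      Finset.mem_biUnion.2 ⟨l.length, Finset.mem_range.2 h, mem_listsOfLen.2 rfl⟩
    have hBcard : n ≤ B.card := by
      have := Finset.card_le_card_of_injOn (fun i => List.replicate i true)
        (fun i hi => hBn _ (by simpa using Finset.mem_range.1 hi))
        (fun i _ j _ h => by apply_fun List.length at h; simpa using h)
      simpa using this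
    obtain ⟨K, hK1, hK2⟩ : ∃ K, B.card = K + 1 ∧ n - 1 ≤ K := ⟨B.card - 1, by omega, by omega⟩
    rw [MakerWins, hK1, MakerWinsAux]
    have hroot : ([] : List Bool) ∈ B := hBn [] (by simpa)
    have hpre : prefixesF [] = {([] : List Bool)} := by decide
    refine Or.inr ⟨[], hroot, ?_⟩
    rcases eq_or_lt_of_le hn with h1 | h1
    · left
      refine ⟨prefixesF [], Finset.mem_image_of_mem _ (mem_listsOfLen.2 (by simp; omega)), ?_⟩
      rw [hpre]
      simp
    · refine Or.inr ⟨⟨[true], Finset.mem_erase.2 ⟨by simp, hBn [true] (by simpa using h1)⟩⟩, ?_⟩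
      intro w hw
      refine maker_step n (n-1) K (by omega) [] w _ _ (by simp; omega) (by rw [hpre]; simp) ?_
      intro q hq hql hqw
      simp only [List.nil_append] at hqw ⊢
      refine Finset.mem_erase.2 ⟨hqw, Finset.mem_erase.2 ⟨hq, hBn q (by omega)⟩⟩
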